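/- Let (X, 𝓑, m, T) be a dissipative measure-preserving transformation of a σ-finite measure space. Then for every f ∈ L¹(m) with f ≥ 0 one has Σ_{n≥0} f(Tⁿx) < ∞ for m-almost every x ∈ X. -/

import Mathlib

open MeasureTheory Set Filter ENNReal

/-- A set `W` is wandering for `T` if `W ∩ T⁻ⁿW = ∅` for all `n ≥ 1`. -/
def Wandering {X : Type*} [MeasurableSpace X] (T : X → X) (W : Set X) : Prop :=
  ∀ n : ℕ, 1 ≤ n → W ∩ (T^[n]) ⁻¹' W = ∅

/-- `T` is dissipative if `X` is, mod `m`, a countable union of wandering sets. -/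
def Dissipative {X : Type*} [MeasurableSpace X] (m : Measure X) (T : X → X) : Prop :=
  ∃ W : ℕ → Set X, (∀ n, MeasurableSet (W n) ∧ Wandering T (W n)) ∧
    m (Set.univ \ ⋃ n, W n) = 0

namespace Stmt5Aux

variable {X : Type*} [MeasurableSpace X]

/-- maximal function: `maxFn T φ N x = max_{0 ≤ k ≤ N} ∑_{n < k} φ (T^[n] x)`. -/
def maxFn (T : X → X) (φ : X → ℝ) : ℕ → X → ℝ
  | 0 => fun _ => 0
  | (N+1) => fun x => max 0 (φ x + maxFn T φ N (T x))

variable {T : X → X} {φ : X → ℝ}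

lemma maxFn_nonneg (N : ℕ) (x : X) : 0 ≤ maxFn T φ N x := by
  cases N with
  | zero => exact le_refl _
  | succ N => exact le_max_left _ _

lemma maxFn_measurable (hT : Measurable T) (hφ : Measurable φ) (N : ℕ) :
    Measurable (maxFn T φ N) := by
  induction N with
  | zero => exact measurable_const
  | succ N ih => exact measurable_const.max (hφ.add (ih.comp hT))

lemma maxFn_mono (N : ℕ) : ∀ x, maxFn T φ N x ≤ maxFn T φ (N+1) x := by
  induction N with
  | zero => intro x; exact maxFn_nonneg 1 x
  | succ N ih =>
    intro x
    exact max_le_max (le_refl 0) (add_le_add_right (ih (T x)) _)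

lemma maxFn_le_sum (N : ℕ) : ∀ x, maxFn T φ N x ≤ ∑ n ∈ Finset.range N, |φ (T^[n] x)| := by
  induction N with
  | zero => intro x; simp [maxFn]
  | succ N ih =>
    intro x
    have h1 : maxFn T φ (N+1) x ≤ max 0 (|φ x| + ∑ n ∈ Finset.range N, |φ (T^[n] (T x))|) := by
      refine max_le_max (le_refl 0) (add_le_add (le_abs_self _) (ih (T x)))
    have h2 : (0:ℝ) ≤ |φ x| + ∑ n ∈ Finset.range N, |φ (T^[n] (T x))| := by
      positivity
    rw [max_eq_right h2] at h1
    refine h1.trans (le_of_eq ?_)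
    rw [Finset.sum_range_succ']
    simp [Function.iterate_succ_apply, add_comm]

lemma sum_le_maxFn (N : ℕ) : ∀ x, (∑ n ∈ Finset.range N, φ (T^[n] x)) ≤ maxFn T φ N x := by
  induction N with
  | zero => intro x; simp [maxFn]
  | succ N ih =>
    intro x
    calc ∑ n ∈ Finset.range (N+1), φ (T^[n] x)
        = (∑ n ∈ Finset.range N, φ (T^[n] (T x))) + φ x := by
          rw [Finset.sum_range_succ']
          simp [Function.iterate_succ_apply]
      _ ≤ maxFn T φ N (T x) + φ x := by gcongr; exact ih (T x)
      _ ≤ max 0 (φ x + maxFn T φ N (T x)) := by rw [add_comm]; exact le_max_right _ _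

lemma maxFn_integrable {m : Measure X} (hTP : MeasurePreserving T m m)
    (hφ : Measurable φ) (hφi : Integrable φ m) (N : ℕ) :
    Integrable (maxFn T φ N) m := by
  have hbound : Integrable (fun x => ∑ n ∈ Finset.range N, |φ (T^[n] x)|) m := by
    apply integrable_finset_sum
    intro n _
    have h1 : Integrable (fun x => φ (T^[n] x)) m := by
      have := (integrable_map_measure (f := T^[n]) (g := φ)
        hφ.aestronglyMeasurable (hTP.iterate n).measurable.aemeasurable (μ := m))
      rw [(hTP.iterate n).map_eq] at this
      exact (this.mp hφi)
    exact h1.abs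
  refine hbound.mono' (maxFn_measurable hTP.measurable hφ N).aestronglyMeasurable ?_
  filter_upwards with x
  rw [Real.norm_eq_abs, abs_of_nonneg (maxFn_nonneg N x)]
  exact maxFn_le_sum N x

lemma comp_integral {m : Measure X} (hTP : MeasurePreserving T m m)
    {g : X → ℝ} (hg : Measurable g) : ∫ x, g (T x) ∂m = ∫ x, g x ∂m := by
  conv_rhs => rw [← hTP.map_eq]
  rw [integral_map hTP.measurable.aemeasurable]
  rw [hTP.map_eq]
  exact hg.aestronglyMeasurable

/-- Hopf maximal ergodic theorem (the easy inequality we need). -/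
lemma maximal {m : Measure X} (hTP : MeasurePreserving T m m)
    (hφ : Measurable φ) (hφi : Integrable φ m) (N : ℕ) :
    0 ≤ ∫ x in {x | 0 < maxFn T φ N x}, φ x ∂m := by
  cases N with
  | zero =>
    simp [maxFn]
  | succ N =>
    set E : Set X := {x | 0 < maxFn T φ (N+1) x} with hE
    have hEm : MeasurableSet E :=
      measurableSet_lt measurable_const (maxFn_measurable hTP.measurable hφ (N+1))
    have hcomp_int : Integrable (fun x => maxFn T φ N (T x)) m := by
      have := (integrable_map_measure (f := T) (g := maxFn T φ N)
        (maxFn_measurable hTP.measurable hφ N).aestronglyMeasurable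
        hTP.measurable.aemeasurable (μ := m))
      rw [hTP.map_eq] at this
      exact this.mp (maxFn_integrable hTP hφ hφi N)
    have hONE : ∀ x ∈ E, φ x = maxFn T φ (N+1) x - maxFn T φ N (T x) := by
      intro x hx
      have hx' : (0:ℝ) < maxFn T φ (N+1) x := hx
      have : maxFn T φ (N+1) x = φ x + maxFn T φ N (T x) := by
        by_cases h : 0 < φ x + maxFn T φ N (T x)
        · exact max_eq_right h.le
        · exfalso
          have : maxFn T φ (N+1) x = 0 := max_eq_left (not_lt.mp h)
          rw [this] at hx'; exact lt_irrefl _ hx'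
      linarith
    have h1 : ∫ x in E, φ x ∂m
        = ∫ x in E, maxFn T φ (N+1) x ∂m - ∫ x in E, maxFn T φ N (T x) ∂m := by
      rw [← integral_sub ((maxFn_integrable hTP hφ hφi (N+1)).integrableOn)
        (hcomp_int.integrableOn)]
      exact setIntegral_congr_fun hEm fun x hx => hONE x hx
    have h2 : ∫ x in E, maxFn T φ (N+1) x ∂m = ∫ x, maxFn T φ (N+1) x ∂m := by
      apply setIntegral_eq_integral_of_forall_compl_eq_zero
      intro x hx
      have : ¬ 0 < maxFn T φ (N+1) x := hx
      exact le_antisymm (not_lt.mp this) (maxFn_nonneg _ _)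
    have h3 : ∫ x in E, maxFn T φ N (T x) ∂m ≤ ∫ x, maxFn T φ N (T x) ∂m :=
      setIntegral_le_integral hcomp_int
        (Eventually.of_forall fun x => maxFn_nonneg N (T x))
    have h4 : ∫ x, maxFn T φ N (T x) ∂m = ∫ x, maxFn T φ N x ∂m :=
      comp_integral hTP (maxFn_measurable hTP.measurable hφ N)
    have h5 : ∫ x, maxFn T φ N x ∂m ≤ ∫ x, maxFn T φ (N+1) x ∂m :=
      integral_mono (maxFn_integrable hTP hφ hφi N)
        (maxFn_integrable hTP hφ hφi (N+1)) (fun x => maxFn_mono N x)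
    rw [h1, h2]
    linarith [h3.trans_eq h4]

/-- Key step: a wandering-subset of the divergence set with finite measure is null. -/
lemma wandering_null {m : Measure X} (hTP : MeasurePreserving T m m)
    {f : X → ℝ} (hfm : Measurable f) (hfi : Integrable f m) (hf0 : ∀ x, 0 ≤ f x)
    {B : Set X} (hB : MeasurableSet B) (hBfin : m B ≠ ⊤)
    (hBw : ∀ n : ℕ, 1 ≤ n → ∀ x ∈ B, T^[n] x ∉ B)
    (hBA : ∀ x ∈ B, ¬ Summable fun n : ℕ => f (T^[n] x)) : m B = 0 := by
  set I := ∫ x, f x ∂m with hI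
  have hI0 : 0 ≤ I := integral_nonneg hf0
  -- main estimate
  have key : ∀ c : ℝ, 0 < c → m B ≤ ENNReal.ofReal (I / c) := by
    intro c hc
    set φ : X → ℝ := fun x => f x - B.indicator (fun _ => c) x with hφdef
    have hφm : Measurable φ := hfm.sub (measurable_const.indicator hB)
    have hindi : Integrable (B.indicator (fun _ => c)) m :=
      (integrable_indicator_iff hB).mpr (integrableOn_const hBfin)
    have hφi : Integrable φ m := hfi.sub hindi
    set E : ℕ → Set X := fun N => {x | 0 < maxFn T φ N x} with hEdef
    have hEm : ∀ N, MeasurableSet (E N) := fun N =>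
      measurableSet_lt measurable_const (maxFn_measurable hTP.measurable hφm N)
    have hEmono : Monotone E := by
      intro a b hab
      induction b with
      | zero => simp at hab; subst hab; exact le_refl _
      | succ b ih =>
        rcases Nat.lt_or_ge a (b+1) with h | h
        · intro x hx
          exact lt_of_lt_of_le (ih (Nat.lt_succ_iff.mp h) hx) (maxFn_mono b x)
        · have : a = b + 1 := le_antisymm hab h
          subst this; exact fun x hx => hx
    -- B is covered by the E N
    have hBE : B ⊆ ⋃ N, E N := by
      intro x hx
      have hdiv : Tendsto (fun N => ∑ n ∈ Finset.range N, f (T^[n] x)) atTop atTop :=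
        (not_summable_iff_tendsto_nat_atTop_of_nonneg (fun n => hf0 _)).mp (hBA x hx)
      obtain ⟨N, hN⟩ := (hdiv.eventually (eventually_gt_atTop c)).exists
      have hsum_ind : ∑ n ∈ Finset.range N, B.indicator (fun _ : X => c) (T^[n] x) ≤ c := by
        have : ∀ n ∈ Finset.range N, B.indicator (fun _ : X => c) (T^[n] x)
            ≤ (if n = 0 then c else 0) := by
          intro n _
          by_cases hn : n = 0
          · subst hn
            simp [Set.indicator_of_mem hx]
          · simp only [hn, if_false]
            have : T^[n] x ∉ B := hBw n (Nat.one_le_iff_ne_zero.mpr hn) x hx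
            simp [Set.indicator_of_notMem this]
        refine (Finset.sum_le_sum this).trans ?_
        rw [Finset.sum_ite_eq' (Finset.range N) 0 (fun _ => c)]
        split <;> simp [hc.le]
      have hS : 0 < ∑ n ∈ Finset.range N, φ (T^[n] x) := by
        have : ∑ n ∈ Finset.range N, φ (T^[n] x)
            = (∑ n ∈ Finset.range N, f (T^[n] x))
              - ∑ n ∈ Finset.range N, B.indicator (fun _ => c) (T^[n] x) := by
          rw [← Finset.sum_sub_distrib]
        rw [this]
        linarith
      exact mem_iUnion.mpr ⟨N, lt_of_lt_of_le hS (sum_le_maxFn N x)⟩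
    -- each m (B ∩ E N) is small
    have hsmall : ∀ N, m (B ∩ E N) ≤ ENNReal.ofReal (I / c) := by
      intro N
      have hmax := maximal hTP hφm hφi N
      have hsplit : ∫ x in E N, φ x ∂m
          = (∫ x in E N, f x ∂m) - (m (B ∩ E N)).toReal * c := by
        rw [integral_sub hfi.integrableOn hindi.integrableOn]
        congr 1
        rw [integral_indicator hB, setIntegral_const, measureReal_restrict_apply hB,
          Set.inter_comm, smul_eq_mul, measureReal_def]
      have hle : (m (B ∩ E N)).toReal * c ≤ I := by
        have h6 : ∫ x in E N, f x ∂m ≤ I :=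
          setIntegral_le_integral hfi (Eventually.of_forall hf0)
        rw [hsplit] at hmax
        linarith
      have hfin : m (B ∩ E N) ≠ ⊤ :=
        (lt_of_le_of_lt (measure_mono Set.inter_subset_left) hBfin.lt_top).ne
      rw [ENNReal.le_ofReal_iff_toReal_le hfin (div_nonneg hI0 hc.le)]
      rw [le_div_iff₀ hc]
      exact hle
    have hBeq : B = ⋃ N, B ∩ E N := by
      rw [← Set.inter_iUnion]
      exact (Set.inter_eq_left.mpr hBE).symm
    calc m B = m (⋃ N, B ∩ E N) := by rw [← hBeq]
      _ = ⨆ N, m (B ∩ E N) := by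
          apply Directed.measure_iUnion
          intro a b
          exact ⟨max a b, Set.inter_subset_inter_right _ (hEmono (le_max_left a b)),
            Set.inter_subset_inter_right _ (hEmono (le_max_right a b))⟩
      _ ≤ ENNReal.ofReal (I / c) := iSup_le hsmall
  -- conclude
  by_contra h
  have hpos : 0 < (m B).toReal := ENNReal.toReal_pos h hBfin
  set ε := (m B).toReal with hε
  have hc : 0 < (I + 1) / ε := div_pos (by linarith) hpos
  have h1 : I / ((I + 1) / ε) < ε := by
    rw [div_div_eq_mul_div, div_lt_iff₀ (by linarith : (0:ℝ) < I + 1)]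
    nlinarith
  have h2 : m B ≤ ENNReal.ofReal (I / ((I + 1) / ε)) := key _ hc
  have h3 : ENNReal.ofReal (I / ((I + 1) / ε)) < ENNReal.ofReal ε :=
    (ENNReal.ofReal_lt_ofReal_iff hpos).mpr h1
  have h4 : ENNReal.ofReal ε = m B := ENNReal.ofReal_toReal hBfin
  rw [h4] at h3
  exact absurd (lt_of_le_of_lt h2 h3) (lt_irrefl _)

end Stmt5Aux

open Stmt5Aux in
theorem stmt5 {X : Type*} [MeasurableSpace X]
    (m : Measure X) [SigmaFinite m]
    (T : X → X) (hT : Measurable T)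
    (hTm : ∀ A : Set X, MeasurableSet A → m (T ⁻¹' A) = m A)
    (hdiss : Dissipative m T)
    (f : X → ℝ) (hf : Integrable f m) (hf0 : 0 ≤ f) :
    ∀ᵐ x ∂m, Summable fun n : ℕ => f (T^[n] x) := by
  -- `T` is measure preserving
  have hTP : MeasurePreserving T m m := by
    refine ⟨hT, ?_⟩
    ext A hA
    rw [Measure.map_apply hT hA]
    exact hTm A hA
  -- measurable modification of `f`
  set g : X → ℝ := fun x => max (hf.1.mk f x) 0 with hgdef
  have hgm : Measurable g := (hf.1.measurable_mk).max measurable_const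
  have hgf : f =ᵐ[m] g := by
    filter_upwards [hf.1.ae_eq_mk] with x hx
    rw [hgdef]; simp only [← hx]
    exact (max_eq_left (hf0 x)).symm
  have hg0 : ∀ x, 0 ≤ g x := fun x => le_max_right _ _
  have hgi : Integrable g m := hf.congr hgf
  -- divergence set for `g`
  set A : Set X := {x | ¬ Summable fun n : ℕ => g (T^[n] x)} with hAdef
  have hAeq : A = {x | (∑' n : ℕ, (ENNReal.ofReal (g (T^[n] x)))) = ⊤} := by
    ext x
    simp only [hAdef, Set.mem_setOf_eq]
    rw [not_iff_comm]
    have h1 : (fun n : ℕ => ENNReal.ofReal (g (T^[n] x)))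
        = fun n : ℕ => ((g (T^[n] x)).toNNReal : ℝ≥0∞) := rfl
    rw [h1, ← Ne, ENNReal.tsum_coe_ne_top_iff_summable, ← NNReal.summable_coe]
    apply summable_congr
    intro n
    exact Real.coe_toNNReal _ (hg0 _)
  have hAm : MeasurableSet A := by
    rw [hAeq]
    have htsum : Measurable fun x => ∑' n : ℕ, ENNReal.ofReal (g (T^[n] x)) :=
      Measurable.ennreal_tsum fun n =>
        ENNReal.measurable_ofReal.comp (hgm.comp (hT.iterate n))
    exact htsum (measurableSet_singleton ⊤)
  -- A is null
  obtain ⟨W, hW, hWnull⟩ := hdiss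
  have hAnull : m A = 0 := by
    have hkey : ∀ k j : ℕ, m (A ∩ W k ∩ spanningSets m j) = 0 := by
      intro k j
      apply wandering_null hTP hgm hgi hg0
        ((hAm.inter (hW k).1).inter (measurableSet_spanningSets m j))
      · exact (lt_of_le_of_lt (measure_mono
          (Set.inter_subset_right)) (measure_spanningSets_lt_top m j)).ne
      · intro n hn x hx hx2
        have h1 : x ∈ W k := hx.1.2
        have h2 : T^[n] x ∈ W k := hx2.1.2
        have hempty := (hW k).2 n hn
        have hmem : x ∈ W k ∩ T^[n] ⁻¹' (W k) := ⟨h1, h2⟩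
        rw [hempty] at hmem
        exact absurd hmem (Set.notMem_empty x)
      · intro x hx
        exact hx.1.1
    have hcover : A ⊆ (⋃ k, ⋃ j, A ∩ W k ∩ spanningSets m j) ∪ (Set.univ \ ⋃ k, W k) := by
      intro x hx
      by_cases h : x ∈ ⋃ k, W k
      · obtain ⟨k, hk⟩ := mem_iUnion.mp h
        obtain ⟨j, hj⟩ := mem_iUnion.mp
          (by rw [iUnion_spanningSets m]; exact Set.mem_univ x : x ∈ ⋃ j, spanningSets m j)
        exact Or.inl (mem_iUnion.mpr ⟨k, mem_iUnion.mpr ⟨j, ⟨⟨hx, hk⟩, hj⟩⟩⟩)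
      · exact Or.inr ⟨Set.mem_univ x, h⟩
    refine le_antisymm ?_ zero_le
    refine le_trans (measure_mono hcover) ?_
    refine le_trans (measure_union_le _ _) ?_
    rw [hWnull]
    simp only [add_zero]
    refine le_trans (measure_iUnion_le _) ?_
    simp only [nonpos_iff_eq_zero]
    refine (ENNReal.tsum_eq_zero).mpr fun k => ?_
    refine le_antisymm (le_trans (measure_iUnion_le _) ?_) zero_le
    simp [hkey k]
  -- transfer back to f
  have hae : ∀ᵐ x ∂m, ∀ n : ℕ, f (T^[n] x) = g (T^[n] x) := by
    rw [ae_all_iff]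
    intro n
    exact (hTP.iterate n).quasiMeasurePreserving.ae_eq_comp hgf
  have hAae : ∀ᵐ x ∂m, Summable fun n : ℕ => g (T^[n] x) := by
    have hnm : ∀ᵐ x ∂m, x ∉ A := (MeasureTheory.measure_eq_zero_iff_ae_notMem).mp hAnull
    filter_upwards [hnm] with x hx
    simp only [hAdef, Set.mem_setOf_eq] at hx
    exact not_not.mp hx
  filter_upwards [hae, hAae] with x h1 h2
  exact h2.congr fun n => (h1 n).symm
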